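/- Singular reduction bracket relations: let I_0,…,I_ℓ be a partition of {0,…,n}, let P_σ denote the orthogonal projection of ℝ^{n+1} onto the coordinates with indices in I_σ, and define the invariants V_σ = ½‖P_σ x‖², T_σ = ½‖P_σ y‖², S_σ = ⟨P_σ x, P_σ y⟩. Then at every point (x,y) with C1 = ⟨x,x⟩ ≠ 0 (note C1 = 2∑_σ V_σ), the Dirac brackets satisfy, for all σ, τ: {V_σ, T_τ} = S_τ·(δ_{στ} − 2V_σ/C1), {V_σ, S_τ} = 2V_σ·(δ_{στ} − 2V_τ/C1), {T_σ, S_τ} = −2T_σ·(δ_{στ} − 2V_τ/C1), {T_σ, T_τ} = (2T_σ·S_τ − 2T_τ·S_σ)/C1, {S_σ, S_τ} = 0, and {V_σ, V_τ} = 0. -/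

import Mathlib

noncomputable section

/-- The canonical Poisson bracket on `T*ℝ^N = ℝ^N × ℝ^N`:
`[f,g] = ∑ ν (∂f/∂x_ν · ∂g/∂y_ν − ∂f/∂y_ν · ∂g/∂x_ν)`. -/
def canPB {N : ℕ} (f g : (Fin N → ℝ) × (Fin N → ℝ) → ℝ)
    (p : (Fin N → ℝ) × (Fin N → ℝ)) : ℝ :=
  ∑ i : Fin N,
    ((fderiv ℝ f p) ((Pi.single i 1 : Fin N → ℝ), 0) *
        (fderiv ℝ g p) (0, (Pi.single i 1 : Fin N → ℝ))
      - (fderiv ℝ f p) (0, (Pi.single i 1 : Fin N → ℝ)) *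
        (fderiv ℝ g p) ((Pi.single i 1 : Fin N → ℝ), 0))

/-- The constraint function `C1(x,y) = ⟨x,x⟩`. -/
def C1fun {N : ℕ} (p : (Fin N → ℝ) × (Fin N → ℝ)) : ℝ := ∑ ν, p.1 ν * p.1 ν

/-- The constraint function `C2(x,y) = ⟨x,y⟩`. -/
def C2fun {N : ℕ} (p : (Fin N → ℝ) × (Fin N → ℝ)) : ℝ := ∑ ν, p.1 ν * p.2 ν

/-- The Dirac bracket
`{f,g} = [f,g] + (1/(2C1))·[f,C1]·[C2,g] − (1/(2C1))·[f,C2]·[C1,g]`. -/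
def diracPB {N : ℕ} (f g : (Fin N → ℝ) × (Fin N → ℝ) → ℝ)
    (p : (Fin N → ℝ) × (Fin N → ℝ)) : ℝ :=
  canPB f g p + (1 / (2 * C1fun p)) * canPB f C1fun p * canPB C2fun g p
    - (1 / (2 * C1fun p)) * canPB f C2fun p * canPB C1fun g p

open scoped Classical

/-- The invariant `V_σ = ½‖P_σ x‖²` of the block `I_σ = part⁻¹(σ)`. -/
def Vinv {n ℓ : ℕ} (part : Fin (n + 1) → Fin (ℓ + 1)) (σ : Fin (ℓ + 1))
    (p : (Fin (n + 1) → ℝ) × (Fin (n + 1) → ℝ)) : ℝ :=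
  (1 / 2) * ∑ i, if part i = σ then p.1 i * p.1 i else 0

/-- The invariant `T_σ = ½‖P_σ y‖²`. -/
def Tinv {n ℓ : ℕ} (part : Fin (n + 1) → Fin (ℓ + 1)) (σ : Fin (ℓ + 1))
    (p : (Fin (n + 1) → ℝ) × (Fin (n + 1) → ℝ)) : ℝ :=
  (1 / 2) * ∑ i, if part i = σ then p.2 i * p.2 i else 0

/-- The invariant `S_σ = ⟨P_σ x, P_σ y⟩`. -/
def Sinv {n ℓ : ℕ} (part : Fin (n + 1) → Fin (ℓ + 1)) (σ : Fin (ℓ + 1))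
    (p : (Fin (n + 1) → ℝ) × (Fin (n + 1) → ℝ)) : ℝ :=
  ∑ i, if part i = σ then p.1 i * p.2 i else 0

namespace Stmt13Aux

variable {n ℓ : ℕ} (part : Fin (n + 1) → Fin (ℓ + 1)) (σ τ : Fin (ℓ + 1))
  (p : (Fin (n + 1) → ℝ) × (Fin (n + 1) → ℝ))

def E1 {N : ℕ} (i : Fin N) : ((Fin N → ℝ) × (Fin N → ℝ)) →L[ℝ] ℝ :=
  (ContinuousLinearMap.proj i).comp (ContinuousLinearMap.fst ℝ _ _)

def E2 {N : ℕ} (i : Fin N) : ((Fin N → ℝ) × (Fin N → ℝ)) →L[ℝ] ℝ :=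
  (ContinuousLinearMap.proj i).comp (ContinuousLinearMap.snd ℝ _ _)

def Fgen {N : ℕ} (a b d : Fin N → ℝ) (q : (Fin N → ℝ) × (Fin N → ℝ)) : ℝ :=
  ∑ i, (a i * (q.1 i * q.1 i) + b i * (q.1 i * q.2 i) + d i * (q.2 i * q.2 i))

lemma hasFDerivAt_Fgen {N : ℕ} (a b d : Fin N → ℝ) (p : (Fin N → ℝ) × (Fin N → ℝ)) :
    HasFDerivAt (Fgen a b d)
      (∑ i, ((a i • (p.1 i • E1 i + p.1 i • E1 i)
        + b i • (p.1 i • E2 i + p.2 i • E1 i))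
        + d i • (p.2 i • E2 i + p.2 i • E2 i))) p := by
  apply HasFDerivAt.fun_sum
  intro i _
  have h1 : HasFDerivAt (fun q : (Fin N → ℝ) × (Fin N → ℝ) => q.1 i) (E1 i) p :=
    (E1 i).hasFDerivAt
  have h2 : HasFDerivAt (fun q : (Fin N → ℝ) × (Fin N → ℝ) => q.2 i) (E2 i) p :=
    (E2 i).hasFDerivAt
  exact (((h1.mul h1).const_mul (a i)).add ((h1.mul h2).const_mul (b i))).add
    ((h2.mul h2).const_mul (d i))

lemma fderiv_Fgen_x {N : ℕ} (a b d : Fin N → ℝ) (p : (Fin N → ℝ) × (Fin N → ℝ)) (j : Fin N) :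
    fderiv ℝ (Fgen a b d) p ((Pi.single j 1 : Fin N → ℝ), 0)
      = 2 * a j * p.1 j + b j * p.2 j := by
  rw [(hasFDerivAt_Fgen a b d p).fderiv]
  simp [E1, E2, ContinuousLinearMap.sum_apply, Pi.single_apply, Finset.sum_add_distrib,
    ite_mul, Finset.sum_ite_eq']
  ring

lemma fderiv_Fgen_y {N : ℕ} (a b d : Fin N → ℝ) (p : (Fin N → ℝ) × (Fin N → ℝ)) (j : Fin N) :
    fderiv ℝ (Fgen a b d) p (0, (Pi.single j 1 : Fin N → ℝ))
      = b j * p.1 j + 2 * d j * p.2 j := by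
  rw [(hasFDerivAt_Fgen a b d p).fderiv]
  simp [E1, E2, ContinuousLinearMap.sum_apply, Pi.single_apply, Finset.sum_add_distrib,
    ite_mul, Finset.sum_ite_eq']
  ring

lemma Vinv_eq : Vinv part σ = Fgen (fun i => if part i = σ then (1/2 : ℝ) else 0) 0 0 := by
  funext q
  unfold Vinv Fgen
  rw [Finset.mul_sum]
  refine Finset.sum_congr rfl fun i _ => ?_
  by_cases h : part i = σ <;> simp [h] <;> ring

lemma Tinv_eq : Tinv part σ = Fgen 0 0 (fun i => if part i = σ then (1/2 : ℝ) else 0) := by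
  funext q
  unfold Tinv Fgen
  rw [Finset.mul_sum]
  refine Finset.sum_congr rfl fun i _ => ?_
  by_cases h : part i = σ <;> simp [h] <;> ring

lemma Sinv_eq : Sinv part σ = Fgen 0 (fun i => if part i = σ then (1 : ℝ) else 0) 0 := by
  funext q
  unfold Sinv Fgen
  refine Finset.sum_congr rfl fun i _ => ?_
  by_cases h : part i = σ <;> simp [h]

lemma C1_eq : (C1fun : (Fin (n+1) → ℝ) × (Fin (n+1) → ℝ) → ℝ) = Fgen 1 0 0 := by
  funext q; unfold C1fun Fgen; simp

lemma C2_eq : (C2fun : (Fin (n+1) → ℝ) × (Fin (n+1) → ℝ) → ℝ) = Fgen 0 1 0 := by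
  funext q; unfold C2fun Fgen; simp

lemma dVx (j : Fin (n+1)) : fderiv ℝ (Vinv part σ) p ((Pi.single j 1 : Fin (n+1) → ℝ), 0)
    = (if part j = σ then 1 else 0) * p.1 j := by
  rw [Vinv_eq, fderiv_Fgen_x]
  by_cases h : part j = σ <;> simp [h] <;> ring

lemma dVy (j : Fin (n+1)) : fderiv ℝ (Vinv part σ) p (0, (Pi.single j 1 : Fin (n+1) → ℝ))
    = 0 := by
  rw [Vinv_eq, fderiv_Fgen_y]; simp

lemma dTx (j : Fin (n+1)) : fderiv ℝ (Tinv part σ) p ((Pi.single j 1 : Fin (n+1) → ℝ), 0)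
    = 0 := by
  rw [Tinv_eq, fderiv_Fgen_x]; simp

lemma dTy (j : Fin (n+1)) : fderiv ℝ (Tinv part σ) p (0, (Pi.single j 1 : Fin (n+1) → ℝ))
    = (if part j = σ then 1 else 0) * p.2 j := by
  rw [Tinv_eq, fderiv_Fgen_y]
  by_cases h : part j = σ <;> simp [h] <;> ring

lemma dSx (j : Fin (n+1)) : fderiv ℝ (Sinv part σ) p ((Pi.single j 1 : Fin (n+1) → ℝ), 0)
    = (if part j = σ then 1 else 0) * p.2 j := by
  rw [Sinv_eq, fderiv_Fgen_x]; simp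

lemma dSy (j : Fin (n+1)) : fderiv ℝ (Sinv part σ) p (0, (Pi.single j 1 : Fin (n+1) → ℝ))
    = (if part j = σ then 1 else 0) * p.1 j := by
  rw [Sinv_eq, fderiv_Fgen_y]; simp

lemma dC1x (j : Fin (n+1)) : fderiv ℝ C1fun p ((Pi.single j 1 : Fin (n+1) → ℝ), 0)
    = 2 * p.1 j := by
  rw [C1_eq, fderiv_Fgen_x]; simp

lemma dC1y (j : Fin (n+1)) : fderiv ℝ C1fun p (0, (Pi.single j 1 : Fin (n+1) → ℝ))
    = 0 := by
  rw [C1_eq, fderiv_Fgen_y]; simp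

lemma dC2x (j : Fin (n+1)) : fderiv ℝ C2fun p ((Pi.single j 1 : Fin (n+1) → ℝ), 0)
    = p.2 j := by
  rw [C2_eq, fderiv_Fgen_x]; simp

lemma dC2y (j : Fin (n+1)) : fderiv ℝ C2fun p (0, (Pi.single j 1 : Fin (n+1) → ℝ))
    = p.1 j := by
  rw [C2_eq, fderiv_Fgen_y]; simp

lemma canPB_antisymm {N : ℕ} (f g : (Fin N → ℝ) × (Fin N → ℝ) → ℝ)
    (p : (Fin N → ℝ) × (Fin N → ℝ)) : canPB g f p = -(canPB f g p) := by
  unfold canPB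
  rw [← Finset.sum_neg_distrib]
  exact Finset.sum_congr rfl fun i _ => by ring

lemma twoV : 2 * Vinv part σ p = ∑ i, if part i = σ then p.1 i * p.1 i else 0 := by
  unfold Vinv; ring

lemma twoT : 2 * Tinv part σ p = ∑ i, if part i = σ then p.2 i * p.2 i else 0 := by
  unfold Tinv; ring

lemma canPB_VV : canPB (Vinv part σ) (Vinv part τ) p = 0 := by
  unfold canPB; simp [dVx, dVy]

lemma canPB_TT : canPB (Tinv part σ) (Tinv part τ) p = 0 := by
  unfold canPB; simp [dTx, dTy]

lemma canPB_VT : canPB (Vinv part σ) (Tinv part τ) p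
    = (if σ = τ then 1 else 0) * Sinv part τ p := by
  unfold canPB
  simp only [dVx, dVy, dTx, dTy, mul_zero, zero_mul, sub_zero]
  by_cases h : σ = τ
  · subst h
    rw [if_pos rfl, one_mul]
    unfold Sinv
    refine Finset.sum_congr rfl fun j _ => ?_
    by_cases hj : part j = σ <;> simp [hj]
  · rw [if_neg h, zero_mul]
    refine Finset.sum_eq_zero fun j _ => ?_
    by_cases hj : part j = σ
    · by_cases hj' : part j = τ
      · exact absurd (hj.symm.trans hj') h
      · simp [hj']
    · simp [hj]

lemma canPB_VS : canPB (Vinv part σ) (Sinv part τ) p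
    = (if σ = τ then 1 else 0) * (2 * Vinv part σ p) := by
  unfold canPB
  simp only [dVx, dVy, dSx, dSy, mul_zero, zero_mul, sub_zero]
  by_cases h : σ = τ
  · subst h
    rw [if_pos rfl, one_mul, twoV]
    refine Finset.sum_congr rfl fun j _ => ?_
    by_cases hj : part j = σ <;> simp [hj]
  · rw [if_neg h, zero_mul]
    refine Finset.sum_eq_zero fun j _ => ?_
    by_cases hj : part j = σ
    · by_cases hj' : part j = τ
      · exact absurd (hj.symm.trans hj') h
      · simp [hj']
    · simp [hj]

lemma canPB_TS : canPB (Tinv part σ) (Sinv part τ) p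
    = -((if σ = τ then 1 else 0) * (2 * Tinv part σ p)) := by
  unfold canPB
  simp only [dTx, dTy, dSx, dSy, mul_zero, zero_mul, zero_sub]
  rw [Finset.sum_neg_distrib, neg_inj]
  by_cases h : σ = τ
  · subst h
    rw [if_pos rfl, one_mul, twoT]
    refine Finset.sum_congr rfl fun j _ => ?_
    by_cases hj : part j = σ <;> simp [hj]
  · rw [if_neg h, zero_mul]
    refine Finset.sum_eq_zero fun j _ => ?_
    by_cases hj : part j = σ
    · by_cases hj' : part j = τ
      · exact absurd (hj.symm.trans hj') h
      · simp [hj']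
    · simp [hj]

lemma canPB_SS : canPB (Sinv part σ) (Sinv part τ) p = 0 := by
  unfold canPB
  simp only [dSx, dSy]
  refine Finset.sum_eq_zero fun j _ => ?_
  by_cases hj : part j = σ <;> by_cases hj' : part j = τ <;> simp [hj, hj'] <;> ring

lemma canPB_V_C1 : canPB (Vinv part σ) C1fun p = 0 := by
  unfold canPB; simp [dVx, dVy, dC1x, dC1y]

lemma canPB_V_C2 : canPB (Vinv part σ) C2fun p = 2 * Vinv part σ p := by
  unfold canPB
  simp only [dVx, dVy, dC2x, dC2y, zero_mul, sub_zero]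
  rw [twoV]
  refine Finset.sum_congr rfl fun j _ => ?_
  by_cases hj : part j = σ <;> simp [hj]

lemma canPB_T_C1 : canPB (Tinv part σ) C1fun p = -(2 * Sinv part σ p) := by
  unfold canPB
  simp only [dTx, dTy, dC1x, dC1y, zero_mul, mul_zero, zero_sub]
  rw [Finset.sum_neg_distrib, neg_inj]
  unfold Sinv
  rw [Finset.mul_sum]
  refine Finset.sum_congr rfl fun j _ => ?_
  by_cases hj : part j = σ <;> simp [hj] <;> ring

lemma canPB_T_C2 : canPB (Tinv part σ) C2fun p = -(2 * Tinv part σ p) := by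
  unfold canPB
  simp only [dTx, dTy, dC2x, dC2y, zero_mul, zero_sub]
  rw [Finset.sum_neg_distrib, neg_inj, twoT]
  refine Finset.sum_congr rfl fun j _ => ?_
  by_cases hj : part j = σ <;> simp [hj]

lemma canPB_S_C1 : canPB (Sinv part σ) C1fun p = -(4 * Vinv part σ p) := by
  unfold canPB
  simp only [dSx, dSy, dC1x, dC1y, mul_zero, zero_sub]
  rw [Finset.sum_neg_distrib, neg_inj]
  have : (4 : ℝ) * Vinv part σ p = 2 * (2 * Vinv part σ p) := by ring
  rw [this, twoV, Finset.mul_sum]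
  refine Finset.sum_congr rfl fun j _ => ?_
  by_cases hj : part j = σ <;> simp [hj] <;> ring

lemma canPB_S_C2 : canPB (Sinv part σ) C2fun p = 0 := by
  unfold canPB
  simp only [dSx, dSy, dC2x, dC2y]
  refine Finset.sum_eq_zero fun j _ => ?_
  by_cases hj : part j = σ <;> simp [hj] <;> ring

lemma canPB_C1_V : canPB C1fun (Vinv part τ) p = 0 := by
  rw [canPB_antisymm, canPB_V_C1]; ring

lemma canPB_C1_T : canPB C1fun (Tinv part τ) p = 2 * Sinv part τ p := by
  rw [canPB_antisymm, canPB_T_C1]; ring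

lemma canPB_C1_S : canPB C1fun (Sinv part τ) p = 4 * Vinv part τ p := by
  rw [canPB_antisymm, canPB_S_C1]; ring

lemma canPB_C2_V : canPB C2fun (Vinv part τ) p = -(2 * Vinv part τ p) := by
  rw [canPB_antisymm, canPB_V_C2]

lemma canPB_C2_T : canPB C2fun (Tinv part τ) p = 2 * Tinv part τ p := by
  rw [canPB_antisymm, canPB_T_C2]; ring

lemma canPB_C2_S : canPB C2fun (Sinv part τ) p = 0 := by
  rw [canPB_antisymm, canPB_S_C2]; ring

end Stmt13Aux


open Stmt13Aux in
/-- **Singular reduction bracket relations.**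
For a partition of `{0,…,n}` into blocks `I_0,…,I_ℓ` (encoded by the surjective block map
`part`) and the invariants `V_σ = ½‖P_σ x‖²`, `T_σ = ½‖P_σ y‖²`, `S_σ = ⟨P_σ x, P_σ y⟩`,
at every point with `C1 = ⟨x,x⟩ ≠ 0` the Dirac brackets satisfy the stated relations. -/
theorem stmt13 (n ℓ : ℕ) (part : Fin (n + 1) → Fin (ℓ + 1))
    (hpart : Function.Surjective part)
    (p : (Fin (n + 1) → ℝ) × (Fin (n + 1) → ℝ))
    (hp : C1fun p ≠ 0) (σ τ : Fin (ℓ + 1)) :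
    diracPB (Vinv part σ) (Tinv part τ) p
      = Sinv part τ p * ((if σ = τ then 1 else 0) - 2 * Vinv part σ p / C1fun p) ∧
    diracPB (Vinv part σ) (Sinv part τ) p
      = 2 * Vinv part σ p * ((if σ = τ then 1 else 0) - 2 * Vinv part τ p / C1fun p) ∧
    diracPB (Tinv part σ) (Sinv part τ) p
      = -(2 * Tinv part σ p) * ((if σ = τ then 1 else 0) - 2 * Vinv part τ p / C1fun p) ∧
    diracPB (Tinv part σ) (Tinv part τ) p
      = (2 * Tinv part σ p * Sinv part τ p - 2 * Tinv part τ p * Sinv part σ p) / C1fun p ∧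
    diracPB (Sinv part σ) (Sinv part τ) p = 0 ∧
    diracPB (Vinv part σ) (Vinv part τ) p = 0 := by
  refine ⟨?_, ?_, ?_, ?_, ?_, ?_⟩ <;> unfold diracPB
  · rw [canPB_VT, canPB_V_C1, canPB_V_C2, canPB_C2_T, canPB_C1_T]
    by_cases h : σ = τ
    · subst h
      simp only [if_pos rfl]
      field_simp
      ring
    · simp only [if_neg h]
      field_simp
      ring
  · rw [canPB_VS, canPB_V_C1, canPB_V_C2, canPB_C2_S, canPB_C1_S]
    by_cases h : σ = τ
    · subst h
      simp only [if_pos rfl]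
      field_simp
      ring
    · simp only [if_neg h]
      field_simp
      ring
  · rw [canPB_TS, canPB_T_C1, canPB_T_C2, canPB_C2_S, canPB_C1_S]
    by_cases h : σ = τ
    · subst h
      simp only [if_pos rfl]
      field_simp
      ring
    · simp only [if_neg h]
      field_simp
      ring
  · rw [canPB_TT, canPB_T_C1, canPB_T_C2, canPB_C2_T, canPB_C1_T]
    field_simp
    ring
  · rw [canPB_SS, canPB_S_C1, canPB_S_C2, canPB_C2_S, canPB_C1_S]
    field_simp
    ring
  · rw [canPB_VV, canPB_V_C1, canPB_V_C2, canPB_C2_V, canPB_C1_V]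
    field_simp
    ring
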